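/- Let p be a prime, G a finite abelian p-group, and k a positive integer with k < p. If a_1,...,a_k are distinct elements of G and b_1,...,b_k are arbitrary elements of G, then there is a permutation π ∈ S_k such that a_1·b_{π(1)}, ..., a_k·b_{π(k)} are pairwise distinct. -/

import Mathlib

open MonoidAlgebra Equiv Finset

section DKSSAux

variable {G : Type*} [CommGroup G] {k : ℕ} (p : ℕ)

/-- Precomposition by a permutation, as a `MulEquiv` of `Fin k → G`. -/
private def dkssPermMulEquiv (G : Type*) [CommGroup G] {k : ℕ} (τ : Equiv.Perm (Fin k)) :
    (Fin k → G) ≃* (Fin k → G) where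
  toFun u := u ∘ ⇑τ⁻¹
  invFun u := u ∘ ⇑τ
  left_inv u := by funext i; simp
  right_inv u := by funext i; simp
  map_mul' u v := rfl

/-- The sign of a permutation, as an element of `ZMod p`. -/
private def dkssSgn {k : ℕ} (τ : Equiv.Perm (Fin k)) : ZMod p :=
  ((Equiv.Perm.sign τ : ℤ) : ZMod p)

private lemma dkssSgn_mul {τ ρ : Equiv.Perm (Fin k)} :
    dkssSgn p (τ * ρ) = dkssSgn p τ * dkssSgn p ρ := by
  simp [dkssSgn, map_mul]

private lemma dkssSgn_sq (τ : Equiv.Perm (Fin k)) : dkssSgn p τ * dkssSgn p τ = 1 := by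
  have h : (Equiv.Perm.sign τ) * (Equiv.Perm.sign τ) = 1 := Int.units_mul_self _
  have : ((Equiv.Perm.sign τ : ℤ) * (Equiv.Perm.sign τ : ℤ) : ℤ) = 1 := by
    rw [← Units.val_mul, h, Units.val_one]
  simp [dkssSgn, ← Int.cast_mul, this]

private lemma dkssSgn_one : dkssSgn p (1 : Equiv.Perm (Fin k)) = 1 := by
  simp [dkssSgn]

/-- Coordinate permutation as an algebra automorphism of the group algebra. -/
private noncomputable def dkssSigma {k : ℕ} (τ : Equiv.Perm (Fin k)) :
    MonoidAlgebra (ZMod p) (Fin k → G) ≃ₐ[ZMod p] MonoidAlgebra (ZMod p) (Fin k → G) :=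
  MonoidAlgebra.domCongr (ZMod p) (ZMod p) (dkssPermMulEquiv G τ)

private lemma dkssSigma_single (τ : Equiv.Perm (Fin k)) (u : Fin k → G) (c : ZMod p) :
    dkssSigma p τ (MonoidAlgebra.single u c) = MonoidAlgebra.single (u ∘ ⇑τ⁻¹) c := by
  simp [dkssSigma, dkssPermMulEquiv]

/-- The alternating sum over coordinate permutations, as a linear map. -/
private noncomputable def dkssAlt :
    MonoidAlgebra (ZMod p) (Fin k → G) →ₗ[ZMod p] MonoidAlgebra (ZMod p) (Fin k → G) :=
  ∑ τ : Equiv.Perm (Fin k), dkssSgn p τ • ((dkssSigma p τ).toLinearMap :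
    MonoidAlgebra (ZMod p) (Fin k → G) →ₗ[ZMod p] MonoidAlgebra (ZMod p) (Fin k → G))

private lemma dkssAlt_apply (x : MonoidAlgebra (ZMod p) (Fin k → G)) :
    dkssAlt p x = ∑ τ : Equiv.Perm (Fin k), dkssSgn p τ • dkssSigma p τ x := by
  simp [dkssAlt, LinearMap.sum_apply, LinearMap.smul_apply]

/-- The signed sum of permuted `a`-tuples. -/
private noncomputable def dkssA (a : Fin k → G) : MonoidAlgebra (ZMod p) (Fin k → G) :=
  ∑ π : Equiv.Perm (Fin k), dkssSgn p π • MonoidAlgebra.single (a ∘ ⇑π) (1 : ZMod p)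

private lemma dkssAlt_A (a : Fin k → G) :
    dkssAlt p (dkssA p a) = ((k.factorial : ZMod p)) • dkssA p a := by
  rw [dkssAlt_apply]
  have hterm : ∀ τ : Equiv.Perm (Fin k), dkssSgn p τ • dkssSigma p τ (dkssA p a) = dkssA p a := by
    intro τ
    rw [dkssA, map_sum, Finset.smul_sum]
    refine (Fintype.sum_equiv (Equiv.mulRight τ)
      (fun ρ => dkssSgn p ρ • MonoidAlgebra.single (a ∘ ⇑ρ) (1 : ZMod p)) _ ?_).symm
    intro ρ
    show dkssSgn p ρ • MonoidAlgebra.single (a ∘ ⇑ρ) (1 : ZMod p)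
      = dkssSgn p τ • dkssSigma p τ (dkssSgn p (ρ * τ) • MonoidAlgebra.single (a ∘ ⇑(ρ * τ)) 1)
    rw [map_smul, dkssSigma_single, smul_smul, dkssSgn_mul, ← mul_assoc, mul_comm (dkssSgn p τ),
      mul_assoc, dkssSgn_sq, mul_one]
    have hfun : (a ∘ ⇑ρ) = ((a ∘ ⇑(ρ * τ)) ∘ ⇑τ⁻¹) := by
      funext i
      simp [Equiv.Perm.mul_apply]
    rw [hfun]
  rw [Finset.sum_congr rfl (fun τ _ => hterm τ), Finset.sum_const, Finset.card_univ,
    Fintype.card_perm, Fintype.card_fin, Nat.cast_smul_eq_nsmul]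

private lemma dkssAlt_single_eq_zero [Fact p.Prime] (h2 : (2 : ZMod p) ≠ 0) (v : Fin k → G) {i j : Fin k}
    (hij : i ≠ j) (hv : v i = v j) :
    dkssAlt p (MonoidAlgebra.single v (1 : ZMod p)) = 0 := by
  rw [dkssAlt_apply]
  simp only [dkssSigma_single]
  set s := Equiv.swap i j with hs
  have hvs : ∀ x, v (s x) = v x := by
    intro x
    rcases eq_or_ne x i with rfl | hxi
    · rw [hs, Equiv.swap_apply_left]; exact hv.symm
    rcases eq_or_ne x j with rfl | hxj
    · rw [hs, Equiv.swap_apply_right]; exact hv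
    · rw [hs, Equiv.swap_apply_of_ne_of_ne hxi hxj]
  set T := ∑ τ : Equiv.Perm (Fin k), dkssSgn p τ • MonoidAlgebra.single (v ∘ ⇑τ⁻¹) (1 : ZMod p)
    with hT
  have hTneg : T = -T := by
    rw [hT]
    rw [← Finset.sum_neg_distrib]
    refine Fintype.sum_equiv (Equiv.mulRight s) _ _ ?_
    intro τ
    show dkssSgn p τ • MonoidAlgebra.single (v ∘ ⇑τ⁻¹) (1 : ZMod p)
      = -(dkssSgn p (τ * s) • MonoidAlgebra.single (v ∘ ⇑(τ * s)⁻¹) 1)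
    have h1 : dkssSgn p (τ * s) = -dkssSgn p τ := by
      rw [dkssSgn_mul]
      have : dkssSgn p s = -1 := by
        rw [dkssSgn, hs, Equiv.Perm.sign_swap hij]; simp
      rw [this, mul_neg_one]
    have hfun : v ∘ ⇑(τ * s)⁻¹ = v ∘ ⇑τ⁻¹ := by
      funext x
      show v ((τ * s)⁻¹ x) = v (τ⁻¹ x)
      rw [mul_inv_rev, Equiv.Perm.mul_apply]
      have : s⁻¹ = s := by rw [hs, Equiv.swap_inv]
      rw [this, hvs]
    rw [h1, hfun, neg_smul, neg_neg]
  have h2T : (2 : ZMod p) • T = 0 := by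
    rw [two_smul]
    nth_rewrite 2 [hTneg]
    rw [add_neg_cancel]
  calc T = ((2 : ZMod p)⁻¹ * 2) • T := by rw [inv_mul_cancel₀ h2, one_smul]
    _ = (2 : ZMod p)⁻¹ • ((2 : ZMod p) • T) := by rw [mul_smul]
    _ = 0 := by rw [h2T, smul_zero]

private lemma dkssSigma_mem_pow (τ : Equiv.Perm (Fin k)) (m : ℕ)
    {x : MonoidAlgebra (ZMod p) (Fin k → G)}
    (hx : x ∈ (nilradical (MonoidAlgebra (ZMod p) (Fin k → G))) ^ m) :
    dkssSigma p τ x ∈ (nilradical (MonoidAlgebra (ZMod p) (Fin k → G))) ^ m := by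
  set f := ((dkssSigma p τ).toRingEquiv.toRingHom :
    MonoidAlgebra (ZMod p) (Fin k → G) →+* MonoidAlgebra (ZMod p) (Fin k → G)) with hf
  have hmap : Ideal.map f (nilradical (MonoidAlgebra (ZMod p) (Fin k → G)))
      ≤ nilradical (MonoidAlgebra (ZMod p) (Fin k → G)) := by
    rw [Ideal.map_le_iff_le_comap]
    intro y hy
    exact mem_nilradical.mpr ((mem_nilradical.mp hy).map f)
  have h1 : f x ∈ Ideal.map f ((nilradical (MonoidAlgebra (ZMod p) (Fin k → G))) ^ m) :=
    Ideal.mem_map_of_mem f hx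
  rw [Ideal.map_pow] at h1
  exact Ideal.pow_right_mono hmap m h1

end DKSSAux

/-- DKSS conjecture for abelian `p`-groups: if `G` is a finite abelian `p`-group,
`k < p`, the `a i` are distinct and the `b i` arbitrary, then some permutation makes
the products distinct. -/
theorem dkss_p_group {G : Type*} [CommGroup G] [Fintype G] {p : ℕ} (hp : p.Prime)
    (hG : IsPGroup p G) {k : ℕ} (hk : 0 < k) (hkp : k < p)
    (a b : Fin k → G) (ha : Function.Injective a) :
    ∃ π : Equiv.Perm (Fin k), Function.Injective (fun i => a i * b (π i)) := by
  classical
  haveI : Fact p.Prime := ⟨hp⟩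
  rcases eq_or_ne k 1 with rfl | hk1
  · exact ⟨1, fun i j _ => Subsingleton.elim i j⟩
  have hk2 : 2 ≤ k := by omega
  have hp2 : 2 < p := by omega
  by_contra hcon
  push_neg at hcon
  -- every permutation produces a collision for `i ↦ b i * a (π i)`
  have hbad : ∀ π : Equiv.Perm (Fin k), ∃ i j : Fin k,
      b i * a (π i) = b j * a (π j) ∧ i ≠ j := by
    intro π
    rw [← Function.not_injective_iff]
    intro hinj
    apply hcon π⁻¹
    have hfe : (fun i => a i * b (π⁻¹ i)) = (fun i => b i * a (π i)) ∘ ⇑π⁻¹ := by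
      funext i
      simp [mul_comm]
    rw [hfe]
    exact hinj.comp (π⁻¹).injective
  -- notation
  set R := MonoidAlgebra (ZMod p) (Fin k → G) with hR
  set A : R := dkssA p a with hA
  set β : R := MonoidAlgebra.single b (1 : ZMod p) with hβ
  have h2ne : (2 : ZMod p) ≠ 0 := by
    intro h
    rw [show ((2 : ZMod p)) = ((2 : ℕ) : ZMod p) by norm_cast,
      ZMod.natCast_eq_zero_iff] at h
    have := Nat.le_of_dvd (by norm_num) h
    omega
  have hfactne : ((k.factorial : ZMod p)) ≠ 0 := by
    intro h
    rw [ZMod.natCast_eq_zero_iff] at h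
    rw [Nat.Prime.dvd_factorial hp] at h
    omega
  -- Step 1 : Alt (β * A) = 0
  have hstep1 : dkssAlt p (β * A) = 0 := by
    rw [hβ, hA, dkssA, Finset.mul_sum]
    have hterm : ∀ π : Equiv.Perm (Fin k),
        MonoidAlgebra.single b (1 : ZMod p) *
          (dkssSgn p π • MonoidAlgebra.single (a ∘ ⇑π) (1 : ZMod p))
        = dkssSgn p π • MonoidAlgebra.single (b * (a ∘ ⇑π)) (1 : ZMod p) := by
      intro π
      rw [mul_smul_comm, MonoidAlgebra.single_mul_single, one_mul]
    rw [Finset.sum_congr rfl (fun π _ => hterm π), map_sum]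
    refine Finset.sum_eq_zero ?_
    intro π _
    rw [map_smul]
    obtain ⟨i, j, hij, hne⟩ := hbad π
    rw [dkssAlt_single_eq_zero p h2ne (b * (a ∘ ⇑π)) hne hij, smul_zero]
  -- Step 2 : the fixed point equation
  have hnu : β * A = A + (β - 1) * A := by ring
  have hstep2 : dkssAlt p ((β - 1) * A) = -((k.factorial : ZMod p) • A) := by
    have h := hstep1
    rw [hnu, map_add, hA, dkssAlt_A, ← hA] at h
    exact eq_neg_of_add_eq_zero_right h
  have hfix : A = (-(((k.factorial : ZMod p))⁻¹)) • dkssAlt p ((β - 1) * A) := by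
    rw [hstep2, smul_neg, neg_smul, neg_neg, smul_smul, inv_mul_cancel₀ hfactne, one_smul]
  -- characteristic p and nilpotency of β - 1
  haveI : CharP R p := charP_of_injective_algebraMap' (ZMod p) (A := R) p
  obtain ⟨n, hn⟩ := IsPGroup.iff_card.mp hG
  have hbpow : b ^ (p ^ (n * k)) = 1 := by
    have hcard : Fintype.card (Fin k → G) = p ^ (n * k) := by
      rw [Fintype.card_fun, ← Nat.card_eq_fintype_card, hn, Fintype.card_fin, ← pow_mul]
    rw [← hcard]
    exact pow_card_eq_one
  have hnil : IsNilpotent (β - 1) := by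
    refine ⟨p ^ (n * k), ?_⟩
    rw [hβ, sub_pow_char_pow, one_pow, MonoidAlgebra.single_pow, hbpow, one_pow,
      ← MonoidAlgebra.one_def, sub_self]
  haveI : Fintype R := Fintype.ofEquiv _ MonoidAlgebra.coeffEquiv.symm
  haveI : Finite R := Finite.of_fintype R
  obtain ⟨n0, hn0⟩ := IsNoetherianRing.isNilpotent_nilradical R
  -- A lies in every power of the nilradical
  have hkey : ∀ m : ℕ, A ∈ (nilradical R) ^ m := by
    intro m
    induction m with
    | zero => rw [pow_zero, Ideal.one_eq_top]; exact Submodule.mem_top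
    | succ m ih =>
      have h1 : (β - 1) * A ∈ (nilradical R) ^ (m + 1) := by
        rw [pow_succ']
        exact Ideal.mul_mem_mul (mem_nilradical.mpr hnil) ih
      have h3 : dkssAlt p ((β - 1) * A) ∈ (nilradical R) ^ (m + 1) := by
        rw [dkssAlt_apply]
        refine Submodule.sum_mem _ ?_
        intro τ _
        exact Submodule.smul_of_tower_mem _ _ (dkssSigma_mem_pow p τ (m + 1) h1)
      rw [hfix]
      exact Submodule.smul_of_tower_mem _ _ h3
  have hAzero : A = 0 := by
    have hmem := hkey n0
    rw [hn0] at hmem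
    simpa using hmem
  -- but the coefficient of `A` at the tuple `a` is `1`
  have hA1 : A.coeff a = 1 := by
    rw [hA, dkssA, MonoidAlgebra.coeff_sum, Finset.sum_apply', Finset.sum_eq_single (1 : Equiv.Perm (Fin k))]
    · rw [MonoidAlgebra.coeff_smul, MonoidAlgebra.coeff_single, Finsupp.smul_apply]
      have hone : a ∘ ⇑(1 : Equiv.Perm (Fin k)) = a := by funext i; simp
      rw [hone, Finsupp.single_eq_same, dkssSgn_one, smul_eq_mul, mul_one]
    · intro π _ hπ
      have hne : a ∘ ⇑π ≠ a := by
        intro hcc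
        exact hπ (Equiv.ext fun i => ha (congrFun hcc i))
      rw [MonoidAlgebra.coeff_smul, MonoidAlgebra.coeff_single, Finsupp.smul_apply,
        Finsupp.single_eq_of_ne' hne, smul_zero]
    · intro habs; exact absurd (Finset.mem_univ _) habs
  rw [hAzero] at hA1
  exact (one_ne_zero : (1 : ZMod p) ≠ 0) (by simpa using hA1.symm)
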